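/- Let F ⊆ I_uf, Θ ⊆ ℤ^I, and let S = {s_g : g∈Θ} and Z = {z_g : g∈Θ} be Θ-pointed families with ⊕_{g∈Θ} ℤ·s_g = ⊕_{g∈Θ} ℤ·z_g as ℤ-submodules of LP. Then ⊕_{g∈Θ} ℤ·frz_{F,g}(s_g) = ⊕_{g∈Θ} ℤ·frz_{F,g}(z_g); in particular {frz_{F,g}(z_g) : g∈Θ} is a ℤ-basis of frz_F^S A^Θ := ⊕_{g∈Θ} ℤ·frz_{F,g}(s_g). -/

import Mathlib

/-! Common setup. -/

noncomputable section

namespace CAFreeze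

variable {I : Type*} [Fintype I] [DecidableEq I]

/-- The Laurent polynomial ring LP = ℤ[x_i^{±1} : i ∈ I], modeled as the group algebra of
ℤ^I over ℤ. -/
abbrev LP (I : Type*) := AddMonoidAlgebra ℤ (I → ℤ)

/-- The monomial x^m for an exponent vector m ∈ ℤ^I. -/
def mono (m : I → ℤ) : LP I := AddMonoidAlgebra.single m 1

/-- The coefficient of the monomial x^m in z ∈ LP. -/
def coeff (z : LP I) (m : I → ℤ) : ℤ := (AddMonoidAlgebra.coeff z : (I → ℤ) →₀ ℤ) m

variable (Iuf : Finset I) (Bt : I → {i // i ∈ Iuf} → ℤ)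

/-- The linear map p* : ℤ^{I_uf} → ℤ^I, p*(n) = B̃·n. -/
def pstar (n : {i // i ∈ Iuf} → ℤ) : I → ℤ := fun i => ∑ kk : {i // i ∈ Iuf}, Bt i kk * n kk

/-- p*(n) for n ∈ ℕ^{I_uf}. -/
def pstarN (n : {i // i ∈ Iuf} → ℕ) : I → ℤ := pstar Iuf Bt fun kk => (n kk : ℤ)

/-- supp n = {k ∈ I_uf : n_k ≠ 0}, as a subset of I. -/
def suppn (n : {i // i ∈ Iuf} → ℕ) : Set I := {i | ∃ h : i ∈ Iuf, n ⟨i, h⟩ ≠ 0}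

/-- LP_{⪯m}: the ℤ-submodule of LP spanned by the monomials x^{m+p*(n)}, n ∈ ℕ^{I_uf}. -/
def LPle (m : I → ℤ) : Submodule ℤ (LP I) :=
  Submodule.span ℤ {z : LP I | ∃ n : {i // i ∈ Iuf} → ℕ, z = mono (m + pstarN Iuf Bt n)}

open Classical in
/-- The freezing operator frz_{F,m}: it keeps the monomials x^{m+p*(n)} with
supp n ∩ F = ∅ and kills the monomials x^{m+p*(n)} with supp n ∩ F ≠ ∅. -/
def frz (F : Finset I) (m : I → ℤ) (z : LP I) : LP I :=
  AddMonoidAlgebra.ofCoeff <| Finsupp.filter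
    (fun e => ∃ n : {i // i ∈ Iuf} → ℕ, e = m + pstarN Iuf Bt n ∧ suppn Iuf n ∩ (F : Set I) = ∅) (AddMonoidAlgebra.coeff z)

/-- z ∈ LP is pointed at g: z = Σ_{n ∈ ℕ^{I_uf}} c_n x^{g+p*(n)} with c_0 = 1. -/
def Pointed (g : I → ℤ) (z : LP I) : Prop :=
  coeff z g = 1 ∧
    ∀ e ∈ (AddMonoidAlgebra.coeff z : (I → ℤ) →₀ ℤ).support, ∃ n : {i // i ∈ Iuf} → ℕ, e = g + pstarN Iuf Bt n

/-- supp z = ∪_{c_n ≠ 0} supp n, for a g-pointed z = Σ_n c_n x^{g+p*(n)}. -/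
def suppz (g : I → ℤ) (z : LP I) : Set I :=
  ⋃ n ∈ {n : {i // i ∈ Iuf} → ℕ | coeff z (g + pstarN Iuf Bt n) ≠ 0}, suppn Iuf n

/-- suppDim z ∈ ℕ^{I_uf}: the coordinatewise maximum of {n : c_n ≠ 0}, for a g-pointed
z = Σ_n c_n x^{g+p*(n)}. -/
def suppDim (g : I → ℤ) (z : LP I) : {i // i ∈ Iuf} → ℕ :=
  fun kk => sSup {d : ℕ | ∃ n : {i // i ∈ Iuf} → ℕ, coeff z (g + pstarN Iuf Bt n) ≠ 0 ∧ n kk = d}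

/-!
STATEMENT 14: Let F ⊆ I_uf, Θ ⊆ ℤ^I, and let S = {s_g : g∈Θ} and Z = {z_g : g∈Θ} be
Θ-pointed families with ⊕_{g∈Θ} ℤ·s_g = ⊕_{g∈Θ} ℤ·z_g as ℤ-submodules of LP. Then
⊕_{g∈Θ} ℤ·frz_{F,g}(s_g) = ⊕_{g∈Θ} ℤ·frz_{F,g}(z_g); in particular
{frz_{F,g}(z_g) : g∈Θ} is a ℤ-basis of frz_F^S A^Θ := ⊕_{g∈Θ} ℤ·frz_{F,g}(s_g).
-/
section Proof14

set_option linter.unusedSectionVars false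

variable {I : Type*} [Fintype I] [DecidableEq I] {Iuf : Finset I} {Bt : I → {i // i ∈ Iuf} → ℤ}

lemma pstarN_add (n m : {i // i ∈ Iuf} → ℕ) :
    pstarN Iuf Bt (n + m) = pstarN Iuf Bt n + pstarN Iuf Bt m := by
  funext i
  simp [pstarN, pstar, Nat.cast_add, mul_add, Finset.sum_add_distrib]

lemma pstarN_zero : pstarN Iuf Bt 0 = 0 := by
  funext i; simp [pstarN, pstar]

lemma pstarN_inj (hfull : Function.Injective (pstar Iuf Bt)) :
    Function.Injective (pstarN Iuf Bt) := by
  intro n m h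
  have := hfull h
  funext kk
  exact_mod_cast congrFun this kk

lemma suppn_zero : suppn Iuf (0 : {i // i ∈ Iuf} → ℕ) = ∅ := by
  ext i; simp [suppn]

lemma suppn_add (n m : {i // i ∈ Iuf} → ℕ) :
    suppn Iuf (n + m) = suppn Iuf n ∪ suppn Iuf m := by
  ext i
  simp only [suppn, Set.mem_setOf_eq, Set.mem_union, Pi.add_apply]
  constructor
  · rintro ⟨h, hne⟩
    rcases Nat.eq_zero_or_pos (n ⟨i, h⟩) with h0 | hp
    · exact Or.inr ⟨h, by omega⟩
    · exact Or.inl ⟨h, by omega⟩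
  · rintro (⟨h, hne⟩ | ⟨h, hne⟩) <;> exact ⟨h, by omega⟩

/-- The strict dominance relation: `a` strictly below `b`. -/
def sbelow (Iuf : Finset I) (Bt : I → {i // i ∈ Iuf} → ℤ) (a b : I → ℤ) : Prop :=
  a ≠ b ∧ ∃ n : {i // i ∈ Iuf} → ℕ, a = b + pstarN Iuf Bt n

lemma sbelow_trans (hfull : Function.Injective (pstar Iuf Bt)) {a b c : I → ℤ}
    (h1 : sbelow Iuf Bt a b) (h2 : sbelow Iuf Bt b c) : sbelow Iuf Bt a c := by
  obtain ⟨hne1, n1, rfl⟩ := h1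
  obtain ⟨hne2, n2, rfl⟩ := h2
  refine ⟨?_, n2 + n1, by rw [pstarN_add]; abel⟩
  intro h
  have h0 : pstarN Iuf Bt (n2 + n1) = pstarN Iuf Bt 0 := by
    rw [pstarN_zero, pstarN_add]
    have : c + (pstarN Iuf Bt n2 + pstarN Iuf Bt n1) = c + 0 := by
      rw [add_zero, ← add_assoc]; exact h
    exact add_left_cancel this
  have : n2 + n1 = 0 := pstarN_inj hfull h0
  have hn2 : n2 = 0 := by
    funext kk
    have h : n2 kk + n1 kk = (0 : {i // i ∈ Iuf} → ℕ) kk := congrFun this kk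
    have := by simpa using h
    exact this.1
  exact hne1 (by rw [hn2, pstarN_zero, add_zero] at hne2 ⊢; exact absurd rfl hne2)

lemma sbelow_irrefl (a : I → ℤ) : ¬ sbelow Iuf Bt a a := fun h => h.1 rfl

/-- Every element of a finite set has a maximal element above it, for a transitive
irreflexive relation. -/
lemma exists_max_above {α : Type*} [DecidableEq α] (r : α → α → Prop)
    (htr : ∀ {a b c}, r a b → r b c → r a c) (hirr : ∀ a, ¬ r a a) (t : Finset α) :
    ∀ a ∈ t, ∃ m ∈ t, (a = m ∨ r a m) ∧ ∀ b ∈ t, ¬ r m b := by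
  induction t using Finset.strongInduction with
  | _ t ih =>
    intro a ha
    by_cases hmax : ∀ b ∈ t, ¬ r a b
    · exact ⟨a, ha, Or.inl rfl, hmax⟩
    · push_neg at hmax
      obtain ⟨b, hb, hab⟩ := hmax
      have hba : b ≠ a := fun h => hirr a (h ▸ hab)
      obtain ⟨m, hm, hbm, hmmax⟩ := ih (t.erase a) (Finset.erase_ssubset ha) b
        (Finset.mem_erase.2 ⟨hba, hb⟩)
      have ham : r a m := by rcases hbm with rfl | h; exact hab; exact htr hab h
      refine ⟨m, Finset.mem_of_mem_erase hm, Or.inr ham, ?_⟩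
      intro c hc hrc
      by_cases hca : c = a
      · exact hirr m (htr hrc (hca ▸ ham))
      · exact hmmax c (Finset.mem_erase.2 ⟨hca, hc⟩) hrc

lemma coeff_lc {α : Type*} (v : α → LP I) (l : α →₀ ℤ) (e : I → ℤ) :
    coeff (Finsupp.linearCombination ℤ v l) e = ∑ h ∈ l.support, l h * coeff (v h) e := by
  rw [Finsupp.linearCombination_apply, Finsupp.sum]
  simp only [coeff]
  rw [AddMonoidAlgebra.coeff_sum, Finset.sum_apply']
  refine Finset.sum_congr rfl fun x hx => ?_
  rw [AddMonoidAlgebra.coeff_smul_apply, smul_eq_mul]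

lemma coeff_lc_max {α : Type*} (u : α → I → ℤ) (v : α → LP I) (l : α →₀ ℤ)
    (hv : ∀ h ∈ l.support, Pointed Iuf Bt (u h) (v h))
    (m : α) (hm : m ∈ l.support)
    (hmax : ∀ b ∈ l.support, b ≠ m → ¬ ∃ n, u m = u b + pstarN Iuf Bt n) :
    coeff (Finsupp.linearCombination ℤ v l) (u m) = l m := by
  rw [coeff_lc]
  rw [Finset.sum_eq_single m (fun b hb hbm => ?_) (fun h => absurd hm h)]
  · rw [(hv m hm).1, mul_one]
  · have h0 : coeff (v b) (u m) = 0 := by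
      by_contra hne
      have : u m ∈ (AddMonoidAlgebra.coeff (v b)).support := Finsupp.mem_support_iff.2 hne
      exact hmax b hb hbm ((hv b hb).2 _ this)
    rw [h0, mul_zero]

/-- The filtering predicate of `frz`. -/
abbrev frzP (Iuf : Finset I) (Bt : I → {i // i ∈ Iuf} → ℤ) (F : Finset I) (m : I → ℤ)
    (e : I → ℤ) : Prop :=
  ∃ n : {i // i ∈ Iuf} → ℕ, e = m + pstarN Iuf Bt n ∧ suppn Iuf n ∩ (F : Set I) = ∅

lemma frz_apply_of {F : Finset I} {m : I → ℤ} (z : LP I) {e : I → ℤ}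
    (hp : frzP Iuf Bt F m e) : AddMonoidAlgebra.coeff (frz Iuf Bt F m z) e = AddMonoidAlgebra.coeff z e := by
  rw [frz, AddMonoidAlgebra.coeff_ofCoeff, Finsupp.filter_apply, if_pos hp]

lemma frz_apply_not {F : Finset I} {m : I → ℤ} (z : LP I) {e : I → ℤ}
    (hp : ¬ frzP Iuf Bt F m e) : AddMonoidAlgebra.coeff (frz Iuf Bt F m z) e = 0 := by
  rw [frz, AddMonoidAlgebra.coeff_ofCoeff, Finsupp.filter_apply, if_neg hp]

lemma frz_zero (F : Finset I) (m : I → ℤ) : frz Iuf Bt F m 0 = 0 := by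
  ext e
  by_cases hp : frzP Iuf Bt F m e
  · rw [frz_apply_of _ hp]
  · rw [frz_apply_not _ hp]; rfl

lemma frz_add (F : Finset I) (m : I → ℤ) (x y : LP I) :
    frz Iuf Bt F m (x + y) = frz Iuf Bt F m x + frz Iuf Bt F m y := by
  ext e
  rw [AddMonoidAlgebra.coeff_add, Finsupp.add_apply]
  by_cases hp : frzP Iuf Bt F m e
  · rw [frz_apply_of _ hp, frz_apply_of _ hp, frz_apply_of _ hp, AddMonoidAlgebra.coeff_add, Finsupp.add_apply]
  · rw [frz_apply_not _ hp, frz_apply_not _ hp, frz_apply_not _ hp, add_zero]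

lemma frz_smul (F : Finset I) (m : I → ℤ) (c : ℤ) (x : LP I) :
    frz Iuf Bt F m (c • x) = c • frz Iuf Bt F m x := by
  ext e
  rw [AddMonoidAlgebra.coeff_smul_apply]
  by_cases hp : frzP Iuf Bt F m e
  · rw [frz_apply_of _ hp, frz_apply_of _ hp, AddMonoidAlgebra.coeff_smul_apply]
  · rw [frz_apply_not _ hp, frz_apply_not _ hp, smul_zero]

lemma frz_sum {α : Type*} (F : Finset I) (m : I → ℤ) (t : Finset α) (f : α → LP I) :
    frz Iuf Bt F m (∑ h ∈ t, f h) = ∑ h ∈ t, frz Iuf Bt F m (f h) := by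
  classical
  induction t using Finset.induction with
  | empty => simp [frz_zero]
  | insert _ _ hnm ih => rw [Finset.sum_insert hnm, Finset.sum_insert hnm, frz_add, ih]

lemma frz_lc {α : Type*} (F : Finset I) (m : I → ℤ) (v : α → LP I) (l : α →₀ ℤ) :
    frz Iuf Bt F m (Finsupp.linearCombination ℤ v l)
      = ∑ h ∈ l.support, l h • frz Iuf Bt F m (v h) := by
  rw [Finsupp.linearCombination_apply, Finsupp.sum, frz_sum]
  exact Finset.sum_congr rfl fun h _ => frz_smul F m (l h) (v h)

lemma frz_support_subset {F : Finset I} {m : I → ℤ} {z : LP I} {e : I → ℤ}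
    (he : e ∈ (AddMonoidAlgebra.coeff (frz Iuf Bt F m z)).support) : e ∈ (AddMonoidAlgebra.coeff z).support := by
  rw [Finsupp.mem_support_iff] at he ⊢
  intro h0
  by_cases hp : frzP Iuf Bt F m e
  · exact he (by rw [frz_apply_of _ hp, h0])
  · exact he (frz_apply_not _ hp)

lemma frz_pointed {F : Finset I} {g : I → ℤ} {z : LP I} (h : Pointed Iuf Bt g z) :
    Pointed Iuf Bt g (frz Iuf Bt F g z) := by
  constructor
  · have hp : frzP Iuf Bt F g g :=
      ⟨0, by rw [pstarN_zero, add_zero], by rw [suppn_zero]; exact Set.empty_inter _⟩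
    rw [coeff, frz_apply_of _ hp]
    exact h.1
  · exact fun e he => h.2 e (frz_support_subset he)

open Classical in
lemma frz_shift (hfull : Function.Injective (pstar Iuf Bt)) (F : Finset I) {g h : I → ℤ}
    (mm : {i // i ∈ Iuf} → ℕ) (hh : h = g + pstarN Iuf Bt mm) (x : LP I)
    (hx : ∀ e ∈ (AddMonoidAlgebra.coeff x).support, ∃ n, e = h + pstarN Iuf Bt n) :
    frz Iuf Bt F g x
      = if suppn Iuf mm ∩ (F : Set I) = ∅ then frz Iuf Bt F h x else 0 := by
  ext e
  by_cases hxe : e ∈ (AddMonoidAlgebra.coeff x).support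
  · obtain ⟨n, hn⟩ := hx e hxe
    have heg : e = g + pstarN Iuf Bt (mm + n) := by
      rw [pstarN_add, hn, hh]; abel
    have hpg : frzP Iuf Bt F g e ↔
        (suppn Iuf mm ∩ (F : Set I) = ∅ ∧ suppn Iuf n ∩ (F : Set I) = ∅) := by
      constructor
      · rintro ⟨n', hn', hd⟩
        have : n' = mm + n := by
          apply pstarN_inj hfull
          apply add_left_cancel (a := g)
          rw [← hn', ← heg]
        rw [this, suppn_add, Set.union_inter_distrib_right, Set.union_empty_iff] at hd
        exact hd
      · rintro ⟨h1, h2⟩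
        exact ⟨mm + n, heg, by
          rw [suppn_add, Set.union_inter_distrib_right, h1, h2, Set.union_empty]⟩
    have hph : frzP Iuf Bt F h e ↔ suppn Iuf n ∩ (F : Set I) = ∅ := by
      constructor
      · rintro ⟨n', hn', hd⟩
        have : n' = n := by
          apply pstarN_inj hfull
          apply add_left_cancel (a := h)
          rw [← hn', ← hn]
        rwa [this] at hd
      · intro h2
        exact ⟨n, hn, h2⟩
    split_ifs with hmm
    · by_cases h2 : suppn Iuf n ∩ (F : Set I) = ∅
      · rw [frz_apply_of _ (hpg.2 ⟨hmm, h2⟩), frz_apply_of _ (hph.2 h2)]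
      · rw [frz_apply_not _ (fun hp => h2 (hpg.1 hp).2), frz_apply_not _ (fun hp => h2 (hph.1 hp))]
    · rw [frz_apply_not _ (fun hp => hmm (hpg.1 hp).1)]
      rfl
  · have hx0 : (AddMonoidAlgebra.coeff x) e = 0 := Finsupp.notMem_support_iff.1 hxe
    have L : AddMonoidAlgebra.coeff (frz Iuf Bt F g x) e = 0 := by
      by_cases hp : frzP Iuf Bt F g e
      · rw [frz_apply_of _ hp, hx0]
      · exact frz_apply_not _ hp
    have R : AddMonoidAlgebra.coeff (frz Iuf Bt F h x) e = 0 := by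
      by_cases hp : frzP Iuf Bt F h e
      · rw [frz_apply_of _ hp, hx0]
      · exact frz_apply_not _ hp
    rw [L]
    split_ifs
    · rw [R]
    · rfl

lemma triangular (hfull : Function.Injective (pstar Iuf Bt)) {Θ : Set (I → ℤ)}
    {s : (I → ℤ) → LP I} (hs : ∀ g ∈ Θ, Pointed Iuf Bt g (s g))
    {l : (I → ℤ) →₀ ℤ} (hl : (l.support : Set (I → ℤ)) ⊆ Θ)
    {g : I → ℤ} {w : LP I} (hw : Pointed Iuf Bt g w)
    (heq : Finsupp.linearCombination ℤ s l = w) :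
    ∀ h ∈ l.support, ∃ n, h = g + pstarN Iuf Bt n := by
  intro h hh
  obtain ⟨m, hm, hlem, hmax⟩ := exists_max_above (sbelow Iuf Bt)
    (fun h1 h2 => sbelow_trans hfull h1 h2) sbelow_irrefl l.support h hh
  have hc : coeff w m = l m := by
    rw [← heq]
    exact coeff_lc_max id s l (fun b hb => hs b (hl hb)) m hm
      (fun b hb hbm ⟨n, hn⟩ => hmax b hb ⟨Ne.symm hbm, n, hn⟩)
  have hm0 : l m ≠ 0 := Finsupp.mem_support_iff.1 hm
  have hmsupp : m ∈ (AddMonoidAlgebra.coeff w).support :=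
    Finsupp.mem_support_iff.2 (by change coeff w m ≠ 0; rw [hc]; exact hm0)
  obtain ⟨n2, hn2⟩ := hw.2 m hmsupp
  rcases hlem with rfl | ⟨hne, n1, hn1⟩
  · exact ⟨n2, hn2⟩
  · exact ⟨n2 + n1, by rw [pstarN_add, hn1, hn2]; abel⟩

lemma frz_span_le (hfull : Function.Injective (pstar Iuf Bt)) (F : Finset I)
    {Θ : Set (I → ℤ)} {s z : (I → ℤ) → LP I}
    (hs : ∀ g ∈ Θ, Pointed Iuf Bt g (s g)) (hz : ∀ g ∈ Θ, Pointed Iuf Bt g (z g))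
    (hle : Submodule.span ℤ (z '' Θ) ≤ Submodule.span ℤ (s '' Θ)) :
    Submodule.span ℤ ((fun g => frz Iuf Bt F g (z g)) '' Θ)
      ≤ Submodule.span ℤ ((fun g => frz Iuf Bt F g (s g)) '' Θ) := by
  rw [Submodule.span_le]
  rintro _ ⟨g, hg, rfl⟩
  show frz Iuf Bt F g (z g) ∈ Submodule.span ℤ ((fun g => frz Iuf Bt F g (s g)) '' Θ)
  have hzg : z g ∈ Submodule.span ℤ (s '' Θ) :=
    hle (Submodule.subset_span ⟨g, hg, rfl⟩)
  rw [Finsupp.mem_span_image_iff_linearCombination] at hzg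
  obtain ⟨l, hl, heq⟩ := hzg
  have hlsupp : (l.support : Set (I → ℤ)) ⊆ Θ := Finsupp.mem_supported ℤ l |>.1 hl
  have htri := triangular hfull hs hlsupp (hz g hg) heq
  rw [← heq, frz_lc]
  apply Submodule.sum_mem
  intro h hh
  apply Submodule.smul_mem
  obtain ⟨mm, hmm⟩ := htri h hh
  rw [frz_shift hfull F mm hmm (s h) (hs h (hlsupp hh)).2]
  split_ifs
  · exact Submodule.subset_span ⟨h, hlsupp hh, rfl⟩
  · exact Submodule.zero_mem _

end Proof14

theorem frz_bases_with_transitions (hfull : Function.Injective (pstar Iuf Bt))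
    (F : Finset I) (hF : F ⊆ Iuf)
    (Θ : Set (I → ℤ)) (s z : (I → ℤ) → LP I)
    (hs : ∀ g ∈ Θ, Pointed Iuf Bt g (s g))
    (hz : ∀ g ∈ Θ, Pointed Iuf Bt g (z g))
    (hAeq : Submodule.span ℤ (s '' Θ) = Submodule.span ℤ (z '' Θ)) :
    Submodule.span ℤ ((fun g => frz Iuf Bt F g (s g)) '' Θ) =
      Submodule.span ℤ ((fun g => frz Iuf Bt F g (z g)) '' Θ) ∧
    LinearIndependent ℤ (fun g : Θ => frz Iuf Bt F (g : I → ℤ) (z (g : I → ℤ))) := by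
  classical
  constructor
  · exact le_antisymm (frz_span_le hfull F hz hs hAeq.le) (frz_span_le hfull F hs hz hAeq.ge)
  · rw [linearIndependent_iff]
    intro l hl0
    ext gg
    rw [Finsupp.zero_apply]
    by_contra hne
    have hgg : gg ∈ l.support := Finsupp.mem_support_iff.2 hne
    obtain ⟨m, hm, -, hmax⟩ := exists_max_above
      (fun a b : Θ => sbelow Iuf Bt (a : I → ℤ) (b : I → ℤ))
      (fun h1 h2 => sbelow_trans hfull h1 h2)
      (fun a => sbelow_irrefl _) l.support gg hgg
    have hc := coeff_lc_max (fun a : Θ => (a : I → ℤ))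
      (fun a : Θ => frz Iuf Bt F (a : I → ℤ) (z (a : I → ℤ))) l
      (fun b _ => frz_pointed (hz (b : I → ℤ) b.2)) m hm ?_
    · rw [hl0] at hc
      have h0 : (0 : ℤ) = l m := by simpa [coeff] using hc
      exact Finsupp.mem_support_iff.1 hm h0.symm
    · rintro b hb hbm ⟨n, hn⟩
      by_cases hub : (m : I → ℤ) = (b : I → ℤ)
      · exact hbm (Subtype.ext hub).symm
      · exact hmax b hb ⟨hub, n, hn⟩

end CAFreeze
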